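/- Let π₁, π₂ be Weil q-numbers with minimal polynomials x² − β₁x + q and x² − β₂x + q respectively (β₁, β₂ ∈ Z), and set Δ = β₁ − β₂. Then the subring R of Z[π₁] × Z[π₂] generated by the two elements (π₁, π₂) and (β₁ − π₁, β₂ − π₂) has index Δ² in Z[π₁] × Z[π₂]. -/

import Mathlib

open Polynomial Complex

/-- The lattice map `(a,b,c,d) ↦ (a + bπ₁, c + dπ₂)` as a bundled hom. -/
noncomputable def weilLat (π₁ π₂ : ℂ) : (ℤ × ℤ) × ℤ × ℤ →+ ℂ × ℂ where
  toFun v := ((v.1.1 : ℂ) + v.1.2 * π₁, (v.2.1 : ℂ) + v.2.2 * π₂)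
  map_zero' := by simp
  map_add' v w := by
    simp only [Prod.fst_add, Prod.snd_add, Prod.mk_add_mk, Prod.ext_iff]
    constructor <;> push_cast <;> ring

/-- The full order `ℤ[π₁] × ℤ[π₂]` as a subring. -/
def weilP (q β₁ β₂ : ℤ) (π₁ π₂ : ℂ) (e1 : π₁ ^ 2 = β₁ * π₁ - q)
    (e2 : π₂ ^ 2 = β₂ * π₂ - q) : Subring (ℂ × ℂ) where
  carrier := { x | ∃ a b c d : ℤ, x = ((a : ℂ) + b * π₁, (c : ℂ) + d * π₂) }
  zero_mem' := ⟨0, 0, 0, 0, by simp [Prod.ext_iff]⟩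
  one_mem' := ⟨1, 0, 1, 0, by simp [Prod.ext_iff]⟩
  add_mem' := by
    rintro x y ⟨a, b, c, d, rfl⟩ ⟨a', b', c', d', rfl⟩
    exact ⟨a + a', b + b', c + c', d + d', by
      simp only [Prod.mk_add_mk, Prod.ext_iff]
      constructor <;> push_cast <;> ring⟩
  neg_mem' := by
    rintro x ⟨a, b, c, d, rfl⟩
    exact ⟨-a, -b, -c, -d, by
      simp only [Prod.neg_mk, Prod.ext_iff]
      constructor <;> push_cast <;> ring⟩
  mul_mem' := by
    rintro x y ⟨a, b, c, d, rfl⟩ ⟨a', b', c', d', rfl⟩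
    refine ⟨a * a' - q * b * b', a * b' + a' * b + β₁ * b * b',
      c * c' - q * d * d', c * d' + c' * d + β₂ * d * d', ?_⟩
    simp only [Prod.mk_mul_mk, Prod.ext_iff]
    constructor
    · push_cast; linear_combination ((b : ℂ) * b') * e1
    · push_cast; linear_combination ((d : ℂ) * d') * e2

/-- The congruence order `R`. -/
def weilR (q β₁ β₂ : ℤ) (π₁ π₂ : ℂ) (e1 : π₁ ^ 2 = β₁ * π₁ - q)
    (e2 : π₂ ^ 2 = β₂ * π₂ - q) : Subring (ℂ × ℂ) where
  carrier := { x | ∃ a b c d : ℤ, x = ((a : ℂ) + b * π₁, (c : ℂ) + d * π₂) ∧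
    (β₁ - β₂) ∣ a - c ∧ (β₁ - β₂) ∣ b - d }
  zero_mem' := ⟨0, 0, 0, 0, by simp [Prod.ext_iff]⟩
  one_mem' := ⟨1, 0, 1, 0, by simp [Prod.ext_iff]⟩
  add_mem' := by
    rintro x y ⟨a, b, c, d, rfl, h1, h2⟩ ⟨a', b', c', d', rfl, h1', h2'⟩
    refine ⟨a + a', b + b', c + c', d + d', ?_, ?_, ?_⟩
    · simp only [Prod.mk_add_mk, Prod.ext_iff]
      constructor <;> push_cast <;> ring
    · have : a + a' - (c + c') = (a - c) + (a' - c') := by ring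
      rw [this]; exact dvd_add h1 h1'
    · have : b + b' - (d + d') = (b - d) + (b' - d') := by ring
      rw [this]; exact dvd_add h2 h2'
  neg_mem' := by
    rintro x ⟨a, b, c, d, rfl, h1, h2⟩
    refine ⟨-a, -b, -c, -d, ?_, ?_, ?_⟩
    · simp only [Prod.neg_mk, Prod.ext_iff]
      constructor <;> push_cast <;> ring
    · have : -a - -c = -(a - c) := by ring
      rw [this]; exact dvd_neg.mpr h1
    · have : -b - -d = -(b - d) := by ring
      rw [this]; exact dvd_neg.mpr h2
  mul_mem' := by
    rintro x y ⟨a, b, c, d, rfl, h1, h2⟩ ⟨a', b', c', d', rfl, h1', h2'⟩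
    have mca : c ≡ a [ZMOD (β₁ - β₂)] := Int.modEq_iff_dvd.mpr h1
    have mdb : d ≡ b [ZMOD (β₁ - β₂)] := Int.modEq_iff_dvd.mpr h2
    have mca' : c' ≡ a' [ZMOD (β₁ - β₂)] := Int.modEq_iff_dvd.mpr h1'
    have mdb' : d' ≡ b' [ZMOD (β₁ - β₂)] := Int.modEq_iff_dvd.mpr h2'
    have mβ : β₂ ≡ β₁ [ZMOD (β₁ - β₂)] := Int.modEq_iff_dvd.mpr dvd_rfl
    refine ⟨a * a' - q * b * b', a * b' + a' * b + β₁ * b * b',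
      c * c' - q * d * d', c * d' + c' * d + β₂ * d * d', ?_, ?_, ?_⟩
    · simp only [Prod.mk_mul_mk, Prod.ext_iff]
      constructor
      · push_cast; linear_combination ((b : ℂ) * b') * e1
      · push_cast; linear_combination ((d : ℂ) * d') * e2
    · exact Int.modEq_iff_dvd.mp
        ((mca.mul mca').sub (((Int.ModEq.refl q).mul mdb).mul mdb'))
    · exact Int.modEq_iff_dvd.mp
        (((mca.mul mdb').add (mca'.mul mdb)).add ((mβ.mul mdb).mul mdb'))

/-- Let `π₁, π₂` be quadratic Weil `q`-numbers with minimal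
polynomials `x² − βᵢx + q`, and `Δ = β₁ − β₂`. The subring `R` of
`ℤ[π₁] × ℤ[π₂]` generated by `(π₁, π₂)` and `(β₁ − π₁, β₂ − π₂)` has index
`Δ²` (as a ℤ-lattice) in `ℤ[π₁] × ℤ[π₂]`. -/
theorem quadratic_weil_order_index
    (p e : ℕ) (hp : p.Prime) (he : 0 < e) (q : ℤ) (hq : q = (p : ℤ) ^ e)
    (β₁ β₂ : ℤ) (hβ₁ : β₁ ^ 2 < 4 * q) (hβ₂ : β₂ ^ 2 < 4 * q)
    (π₁ π₂ : ℂ)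
    (h₁ : minpoly ℤ π₁ =
      Polynomial.X ^ 2 - Polynomial.C β₁ * Polynomial.X + Polynomial.C q)
    (h₂ : minpoly ℤ π₂ =
      Polynomial.X ^ 2 - Polynomial.C β₂ * Polynomial.X + Polynomial.C q)
    (P R : Subring (ℂ × ℂ))
    (hP : P = Subring.closure {((π₁ : ℂ), (0 : ℂ)), ((0 : ℂ), (π₂ : ℂ)), ((1 : ℂ), (0 : ℂ))})
    (hR : R = Subring.closure
      {((π₁ : ℂ), (π₂ : ℂ)), (((β₁ : ℂ) - π₁), ((β₂ : ℂ) - π₂))}) :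
    (Subring.toAddSubgroup R).relIndex (Subring.toAddSubgroup P) =
      ((β₁ - β₂).natAbs) ^ 2 := by
  -- the quadratic relations
  have e1 : π₁ ^ 2 = (β₁ : ℂ) * π₁ - q := by
    have h := minpoly.aeval ℤ π₁
    rw [h₁] at h
    simp only [map_add, map_sub, map_pow, map_mul, Polynomial.aeval_X,
      Polynomial.aeval_C, map_intCast, algebraMap_int_eq, eq_intCast] at h
    linear_combination h
  have e2 : π₂ ^ 2 = (β₂ : ℂ) * π₂ - q := by
    have h := minpoly.aeval ℤ π₂
    rw [h₂] at h
    simp only [map_add, map_sub, map_pow, map_mul, Polynomial.aeval_X,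
      Polynomial.aeval_C, map_intCast, algebraMap_int_eq, eq_intCast] at h
    linear_combination h
  -- π₁, π₂ are non-real
  have nonreal : ∀ (π : ℂ) (β : ℤ), π ^ 2 = (β : ℂ) * π - q → β ^ 2 < 4 * q →
      π.im ≠ 0 := by
    intro π β eπ hβ h0
    have hπ : π = (π.re : ℂ) := Complex.ext rfl (by simp [h0])
    rw [hπ] at eπ
    have : ((π.re ^ 2 : ℝ) : ℂ) = (((β : ℝ) * π.re - (q : ℝ) : ℝ) : ℂ) := by
      push_cast; push_cast at eπ; linear_combination eπ
    have hr : (π.re : ℝ) ^ 2 = (β : ℝ) * π.re - (q : ℝ) := by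
      have := Complex.ofReal_inj.mp this
      linarith [this]
    have hb : ((β : ℝ)) ^ 2 < 4 * (q : ℝ) := by exact_mod_cast hβ
    nlinarith [sq_nonneg (2 * π.re - (β : ℝ))]
  have him1 : π₁.im ≠ 0 := nonreal π₁ β₁ e1 hβ₁
  have him2 : π₂.im ≠ 0 := nonreal π₂ β₂ e2 hβ₂
  -- linear independence
  have indep : ∀ (π : ℂ), π.im ≠ 0 → ∀ a b : ℤ, (a : ℂ) + b * π = 0 →
      a = 0 ∧ b = 0 := by
    intro π him a b h
    have h2 := congrArg Complex.im h
    simp only [Complex.add_im, Complex.intCast_im, Complex.mul_im,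
      Complex.intCast_re, Complex.zero_im, zero_mul, add_zero, zero_add] at h2
    have hb : (b : ℝ) = 0 := by
      rcases mul_eq_zero.mp h2 with h' | h'
      · exact h'
      · exact absurd h' him
    have hb' : b = 0 := by exact_mod_cast hb
    subst hb'
    have h1 := congrArg Complex.re h
    simp at h1
    exact ⟨by exact_mod_cast h1, rfl⟩
  have inj : ∀ a b c d a' b' c' d' : ℤ,
      ((a : ℂ) + b * π₁, (c : ℂ) + d * π₂) = ((a' : ℂ) + b' * π₁, (c' : ℂ) + d' * π₂) →
      a = a' ∧ b = b' ∧ c = c' ∧ d = d' := by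
    intro a b c d a' b' c' d' h
    rw [Prod.ext_iff] at h
    have k1 := indep π₁ him1 (a - a') (b - b') (by push_cast; linear_combination h.1)
    have k2 := indep π₂ him2 (c - c') (d - d') (by push_cast; linear_combination h.2)
    omega
  -- P is the full lattice
  have hPcar : ∀ x : ℂ × ℂ, x ∈ P ↔ ∃ a b c d : ℤ, x = ((a : ℂ) + b * π₁, (c : ℂ) + d * π₂) := by
    intro x
    constructor
    · intro hx
      have hle : P ≤ weilP q β₁ β₂ π₁ π₂ e1 e2 := by
        rw [hP]
        apply Subring.closure_le.mpr
        rintro y hy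
        simp only [Set.mem_insert_iff, Set.mem_singleton_iff] at hy
        rcases hy with rfl | rfl | rfl
        · exact ⟨0, 1, 0, 0, by simp⟩
        · exact ⟨0, 0, 0, 1, by simp⟩
        · exact ⟨1, 0, 0, 0, by simp⟩
      exact hle hx
    · rintro ⟨a, b, c, d, rfl⟩
      subst hP
      have hgen1 : ((π₁ : ℂ), (0 : ℂ)) ∈ Subring.closure
          {((π₁ : ℂ), (0 : ℂ)), ((0 : ℂ), (π₂ : ℂ)), ((1 : ℂ), (0 : ℂ))} :=
        Subring.subset_closure (by simp)
      have hgen2 : ((0 : ℂ), (π₂ : ℂ)) ∈ Subring.closure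
          {((π₁ : ℂ), (0 : ℂ)), ((0 : ℂ), (π₂ : ℂ)), ((1 : ℂ), (0 : ℂ))} :=
        Subring.subset_closure (by simp)
      have hgen3 : ((1 : ℂ), (0 : ℂ)) ∈ Subring.closure
          {((π₁ : ℂ), (0 : ℂ)), ((0 : ℂ), (π₂ : ℂ)), ((1 : ℂ), (0 : ℂ))} :=
        Subring.subset_closure (by simp)
      have hgen4 : ((0 : ℂ), (1 : ℂ)) ∈ Subring.closure
          {((π₁ : ℂ), (0 : ℂ)), ((0 : ℂ), (π₂ : ℂ)), ((1 : ℂ), (0 : ℂ))} := by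
        have : ((0 : ℂ), (1 : ℂ)) = 1 - ((1 : ℂ), (0 : ℂ)) := by
          simp [Prod.ext_iff]
        rw [this]
        exact sub_mem (one_mem _) hgen3
      have : ((a : ℂ) + b * π₁, (c : ℂ) + d * π₂) =
          a • ((1 : ℂ), (0 : ℂ)) + b • ((π₁ : ℂ), (0 : ℂ)) +
          c • ((0 : ℂ), (1 : ℂ)) + d • ((0 : ℂ), (π₂ : ℂ)) := by
        simp only [Prod.smul_mk, Prod.mk_add_mk, Prod.ext_iff, zsmul_eq_mul]
        constructor <;> push_cast <;> ring
      rw [this]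
      exact add_mem (add_mem (add_mem (zsmul_mem hgen3 a) (zsmul_mem hgen1 b))
        (zsmul_mem hgen4 c)) (zsmul_mem hgen2 d)
  -- R membership characterization
  have hRcar : ∀ a b c d : ℤ,
      (((a : ℂ) + b * π₁, (c : ℂ) + d * π₂) ∈ R) ↔
      ((β₁ - β₂) ∣ a - c ∧ (β₁ - β₂) ∣ b - d) := by
    intro a b c d
    constructor
    · intro hx
      have hle : R ≤ weilR q β₁ β₂ π₁ π₂ e1 e2 := by
        rw [hR]
        apply Subring.closure_le.mpr
        rintro y hy
        simp only [Set.mem_insert_iff, Set.mem_singleton_iff] at hy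
        rcases hy with rfl | rfl
        · exact ⟨0, 1, 0, 1, by simp, by simp, by simp⟩
        · exact ⟨β₁, -1, β₂, -1, by
            simp only [Prod.ext_iff]
            constructor <;> push_cast <;> ring, ⟨1, by ring⟩, by simp⟩
      obtain ⟨a', b', c', d', heq, hd1, hd2⟩ := hle hx
      obtain ⟨ra, rb, rc, rd⟩ := inj a b c d a' b' c' d' heq
      subst ra; subst rb; subst rc; subst rd
      exact ⟨hd1, hd2⟩
    · rintro ⟨⟨s, hs⟩, ⟨t, ht⟩⟩
      subst hR
      have hF : ((π₁ : ℂ), (π₂ : ℂ)) ∈ Subring.closure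
          {((π₁ : ℂ), (π₂ : ℂ)), (((β₁ : ℂ) - π₁), ((β₂ : ℂ) - π₂))} :=
        Subring.subset_closure (by simp)
      have hV : (((β₁ : ℂ) - π₁), ((β₂ : ℂ) - π₂)) ∈ Subring.closure
          {((π₁ : ℂ), (π₂ : ℂ)), (((β₁ : ℂ) - π₁), ((β₂ : ℂ) - π₂))} :=
        Subring.subset_closure (by simp)
      have hD : (((β₁ - β₂ : ℤ) : ℂ), (0 : ℂ)) ∈ Subring.closure
          {((π₁ : ℂ), (π₂ : ℂ)), (((β₁ : ℂ) - π₁), ((β₂ : ℂ) - π₂))} := by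
        have : (((β₁ - β₂ : ℤ) : ℂ), (0 : ℂ)) =
            ((π₁ : ℂ), (π₂ : ℂ)) + (((β₁ : ℂ) - π₁), ((β₂ : ℂ) - π₂)) - β₂ • 1 := by
          simp only [Prod.mk_add_mk, Prod.ext_iff, Prod.smul_mk, Prod.mk_sub_mk,
            Prod.fst_one, Prod.snd_one, Prod.fst_sub, Prod.snd_sub, zsmul_eq_mul,
            Prod.fst_mul, Prod.snd_mul, Prod.fst_intCast, Prod.snd_intCast]
          constructor <;> push_cast <;> ring
        rw [this]
        exact sub_mem (add_mem hF hV) (zsmul_mem (one_mem _) β₂)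
      have hDπ : (((β₁ - β₂ : ℤ) : ℂ) * π₁, (0 : ℂ)) ∈ Subring.closure
          {((π₁ : ℂ), (π₂ : ℂ)), (((β₁ : ℂ) - π₁), ((β₂ : ℂ) - π₂))} := by
        have : (((β₁ - β₂ : ℤ) : ℂ) * π₁, (0 : ℂ)) =
            ((π₁ : ℂ), (π₂ : ℂ)) * ((π₁ : ℂ), (π₂ : ℂ)) -
            β₂ • ((π₁ : ℂ), (π₂ : ℂ)) + q • 1 := by
          simp only [Prod.mk_mul_mk, Prod.ext_iff, Prod.smul_mk, Prod.mk_sub_mk,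
            Prod.fst_one, Prod.snd_one, Prod.fst_add, Prod.snd_add, Prod.fst_sub,
            Prod.snd_sub, Prod.smul_fst, Prod.smul_snd, zsmul_eq_mul,
            Prod.fst_mul, Prod.snd_mul, Prod.fst_intCast, Prod.snd_intCast]
          constructor
          · push_cast; linear_combination -e1
          · push_cast; linear_combination -e2
        rw [this]
        exact add_mem (sub_mem (mul_mem hF hF) (zsmul_mem hF β₂)) (zsmul_mem (one_mem _) q)
      have key : ((a : ℂ) + b * π₁, (c : ℂ) + d * π₂) =
          c • (1 : ℂ × ℂ) + d • ((π₁ : ℂ), (π₂ : ℂ)) +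
          s • (((β₁ - β₂ : ℤ) : ℂ), (0 : ℂ)) + t • (((β₁ - β₂ : ℤ) : ℂ) * π₁, (0 : ℂ)) := by
        have hsC : (a : ℂ) - c = ((β₁ - β₂ : ℤ) : ℂ) * s := by exact_mod_cast hs
        have htC : (b : ℂ) - d = ((β₁ - β₂ : ℤ) : ℂ) * t := by exact_mod_cast ht
        simp only [Prod.smul_mk, Prod.mk_add_mk, Prod.ext_iff, Prod.fst_one,
          Prod.snd_one, Prod.smul_fst, Prod.smul_snd, Prod.fst_add, Prod.snd_add,
          zsmul_eq_mul, Prod.fst_mul, Prod.snd_mul, Prod.fst_intCast,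
          Prod.snd_intCast]
        constructor
        · push_cast; push_cast at hsC htC; linear_combination hsC + π₁ * htC
        · push_cast; ring
      rw [key]
      exact add_mem (add_mem (add_mem (zsmul_mem (one_mem _) c) (zsmul_mem hF d))
        (zsmul_mem hD s)) (zsmul_mem hDπ t)
  -- set up index computation
  set n : ℕ := (β₁ - β₂).natAbs with hn
  set f : (ℤ × ℤ) × ℤ × ℤ →+ ℂ × ℂ := weilLat π₁ π₂ with hf
  have hfapply : ∀ v : (ℤ × ℤ) × ℤ × ℤ,
      f v = ((v.1.1 : ℂ) + v.1.2 * π₁, (v.2.1 : ℂ) + v.2.2 * π₂) := fun v => rfl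
  have hrange : f.range = Subring.toAddSubgroup P := by
    ext x
    simp only [AddMonoidHom.mem_range, Subring.mem_toAddSubgroup]
    rw [hPcar x]
    constructor
    · rintro ⟨v, rfl⟩
      exact ⟨v.1.1, v.1.2, v.2.1, v.2.2, rfl⟩
    · rintro ⟨a, b, c, d, rfl⟩
      exact ⟨((a, b), (c, d)), rfl⟩
  -- the congruence map
  set g : (ℤ × ℤ) × ℤ × ℤ →+ ZMod n × ZMod n :=
    { toFun := fun v => (((v.1.1 - v.2.1 : ℤ) : ZMod n), ((v.1.2 - v.2.2 : ℤ) : ZMod n))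
      map_zero' := by simp
      map_add' := fun v w => by
        simp only [Prod.fst_add, Prod.snd_add, Prod.mk_add_mk, Prod.ext_iff]
        constructor <;> push_cast <;> ring } with hg
  have hker : (Subring.toAddSubgroup R).comap f = g.ker := by
    ext v
    simp only [AddSubgroup.mem_comap, Subring.mem_toAddSubgroup, AddMonoidHom.mem_ker,
      hfapply, hg, AddMonoidHom.coe_mk, ZeroHom.coe_mk, Prod.ext_iff, Prod.fst_zero,
      Prod.snd_zero]
    rw [hRcar v.1.1 v.1.2 v.2.1 v.2.2]
    rw [ZMod.intCast_zmod_eq_zero_iff_dvd, ZMod.intCast_zmod_eq_zero_iff_dvd, hn,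
      Int.natAbs_dvd, Int.natAbs_dvd]
  have hsurj : Function.Surjective g := by
    rintro ⟨x, y⟩
    obtain ⟨a, rfl⟩ := ZMod.intCast_surjective x
    obtain ⟨b, rfl⟩ := ZMod.intCast_surjective y
    exact ⟨((a, b), (0, 0)), by simp [hg]⟩
  calc (Subring.toAddSubgroup R).relIndex (Subring.toAddSubgroup P)
      = (Subring.toAddSubgroup R).relIndex f.range := by rw [hrange]
    _ = ((Subring.toAddSubgroup R).comap f).index :=
        (AddSubgroup.index_comap _ f).symm
    _ = g.ker.index := by rw [hker]
    _ = Nat.card g.range := AddSubgroup.index_ker g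
    _ = Nat.card (ZMod n × ZMod n) := by
        rw [AddMonoidHom.range_eq_top.mpr hsurj]
        exact Nat.card_congr AddSubgroup.topEquiv.toEquiv
    _ = n ^ 2 := by rw [Nat.card_prod, Nat.card_zmod]; ring
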